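/- The weighted Cheeger constant is bounded above by √(2·δ_max·λ₂(L_W)/w_min), where δ_max is the maximum weighted node degree and w_min the minimum node weight. -/

import Mathlib

section CheegerHelpers
open Matrix Finset

lemma sweep_lemma {N : ℕ} (a : Matrix (Fin N) (Fin N) ℝ) (hnn : ∀ i j, 0 ≤ a i j)
    (w : Fin N → ℝ) (hw : ∀ i, 0 < w i) (hW : ℝ)
    (hcut : ∀ S : Finset (Fin N), S.Nonempty → S ≠ Finset.univ →
      (∑ i ∈ S, w i) ≤ (∑ i ∈ Sᶜ, w i) → hW * ∑ i ∈ S, w i ≤ ∑ i ∈ S, ∑ j ∈ Sᶜ, a i j) :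
    ∀ n (f : Fin N → ℝ), (Finset.univ.image f).card ≤ n → (∀ i, 0 ≤ f i) →
      ∀ P : Finset (Fin N), (∀ i, 0 < f i → i ∈ P) → (∑ i ∈ P, w i) ≤ (∑ i ∈ Pᶜ, w i) →
      hW * ∑ i, w i * f i ^ 2 ≤ ∑ i, ∑ j, a i j * max (f i ^ 2 - f j ^ 2) 0 := by
  intro n
  induction n with
  | zero =>
    intro f hcard _ _ _ _
    have h0 : (Finset.univ.image f) = ∅ := Finset.card_eq_zero.mp (Nat.le_zero.mp hcard)
    have hu : (Finset.univ : Finset (Fin N)) = ∅ := by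
      by_contra h
      obtain ⟨i, hi⟩ := Finset.nonempty_iff_ne_empty.mpr h
      have : f i ∈ Finset.univ.image f := Finset.mem_image_of_mem f hi
      simp [h0] at this
    rw [hu]; simp
  | succ n ih =>
    intro f hcard hf0 P hPf hP
    by_cases hzero : ∀ i, f i = 0
    · have h1 : ∑ i, w i * f i ^ 2 = 0 := by
        apply Finset.sum_eq_zero; intro i _; rw [hzero i]; ring
      have h2 : (0:ℝ) ≤ ∑ i : Fin N, ∑ j : Fin N, a i j * max (f i ^ 2 - f j ^ 2) 0 := by
        apply Finset.sum_nonneg; intro i _; apply Finset.sum_nonneg; intro j _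
        exact mul_nonneg (hnn i j) (le_max_right _ _)
      rw [h1, mul_zero]; exact h2
    · push_neg at hzero
      obtain ⟨i0, hi0⟩ := hzero
      have hne : (Finset.univ : Finset (Fin N)).Nonempty := ⟨i0, Finset.mem_univ i0⟩
      set M := Finset.univ.sup' hne f with hM
      have hMax : ∀ i, f i ≤ M := fun i => Finset.le_sup' f (Finset.mem_univ i)
      have hMpos : 0 < M := lt_of_le_of_ne (le_trans (hf0 i0) (hMax i0)) (by
        intro h
        exact hi0 (le_antisymm (h ▸ hMax i0) (hf0 i0)))
      set T : Finset (Fin N) := Finset.univ.filter (fun i => f i = M) with hT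
      have hTmem : ∀ i, i ∈ T ↔ f i = M := by
        intro i; simp [hT]
      obtain ⟨iM, _, hiM⟩ := Finset.exists_mem_eq_sup' hne f
      rw [← hM] at hiM
      have hTne : T.Nonempty := ⟨iM, (hTmem iM).mpr hiM.symm⟩
      have hTP : T ⊆ P := by
        intro i hi; exact hPf i ((hTmem i).mp hi ▸ hMpos)
      have hwP : 0 < ∑ i ∈ P, w i :=
        Finset.sum_pos (fun i _ => hw i) ⟨iM, hTP ((hTmem iM).mpr hiM.symm)⟩
      have hPuniv : P ≠ Finset.univ := by
        intro h
        rw [h, Finset.compl_univ] at hP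
        rw [Finset.sum_empty] at hP
        rw [h] at hwP
        linarith
      have hTuniv : T ≠ Finset.univ := by
        intro h
        exact hPuniv (Finset.univ_subset_iff.mp (h ▸ hTP))
      have hTcne : Tᶜ.Nonempty := by
        rw [← Finset.card_pos, Finset.card_compl, Nat.sub_pos_iff_lt]
        exact lt_of_le_of_ne (Finset.card_le_univ T) (by
          intro h; exact hTuniv ((Finset.card_eq_iff_eq_univ T).mp (by simp [h])))
      set m := Tᶜ.sup' hTcne f with hm
      obtain ⟨jm, hjmTc, hjm⟩ := Finset.exists_mem_eq_sup' hTcne f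
      rw [← hm] at hjm
      have hmnn : 0 ≤ m := hjm ▸ hf0 jm
      have hmlt : m < M := by
        rw [hjm]
        refine lt_of_le_of_ne (hMax jm) ?_
        intro h
        rw [Finset.mem_compl, hTmem] at hjmTc
        exact hjmTc h
      have hmub : ∀ i, i ∉ T → f i ≤ m := by
        intro i hi
        exact Finset.le_sup' f (Finset.mem_compl.mpr hi)
      set f' : Fin N → ℝ := fun i => min (f i) m with hf'
      have hf'T : ∀ i, i ∈ T → f' i = m := by
        intro i hi
        simp only [hf']
        exact min_eq_right (((hTmem i).mp hi).symm ▸ le_of_lt hmlt)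
      have hf'nT : ∀ i, i ∉ T → f' i = f i := by
        intro i hi
        simp only [hf']
        exact min_eq_left (hmub i hi)
      -- image card decreases
      have hsub : Finset.univ.image f' ⊆ (Finset.univ.image f).erase M := by
        intro x hx
        obtain ⟨i, _, hxi⟩ := Finset.mem_image.mp hx
        by_cases hi : i ∈ T
        · rw [hf'T i hi] at hxi
          refine Finset.mem_erase.mpr ⟨hxi ▸ ne_of_lt hmlt, ?_⟩
          exact hxi ▸ (hjm ▸ Finset.mem_image_of_mem f (Finset.mem_univ jm))
        · rw [hf'nT i hi] at hxi
          refine Finset.mem_erase.mpr ⟨hxi ▸ (fun h => hi ((hTmem i).mpr h)), ?_⟩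
          exact hxi ▸ Finset.mem_image_of_mem f (Finset.mem_univ i)
      have hMmem : M ∈ Finset.univ.image f := hiM ▸ Finset.mem_image_of_mem f (Finset.mem_univ iM)
      have hcard' : (Finset.univ.image f').card ≤ n := by
        have h1 := Finset.card_le_card hsub
        have h2 := Finset.card_erase_of_mem hMmem
        omega
      have hf'0 : ∀ i, 0 ≤ f' i := fun i => le_min (hf0 i) hmnn
      have hPf' : ∀ i, 0 < f' i → i ∈ P := by
        intro i hi
        exact hPf i (lt_of_lt_of_le hi (min_le_left _ _))
      have IH := ih f' hcard' hf'0 P hPf' hP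
      -- cut bound for T
      have hwT : ∑ i ∈ T, w i ≤ ∑ i ∈ Tᶜ, w i := by
        calc ∑ i ∈ T, w i ≤ ∑ i ∈ P, w i :=
              Finset.sum_le_sum_of_subset_of_nonneg hTP (fun i _ _ => le_of_lt (hw i))
          _ ≤ ∑ i ∈ Pᶜ, w i := hP
          _ ≤ ∑ i ∈ Tᶜ, w i :=
              Finset.sum_le_sum_of_subset_of_nonneg
                (Finset.compl_subset_compl.mpr hTP) (fun i _ _ => le_of_lt (hw i))
      have hcutT := hcut T hTne hTuniv hwT
      -- pointwise identities
      have hMm : 0 ≤ M^2 - m^2 := by nlinarith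
      have hidw : ∀ i, w i * f i ^ 2
          = w i * f' i ^ 2 + (if i ∈ T then w i * (M^2 - m^2) else 0) := by
        intro i
        by_cases hi : i ∈ T
        · rw [hf'T i hi, (hTmem i).mp hi, if_pos hi]; ring
        · rw [hf'nT i hi, if_neg hi]; ring
      have hsumw : ∑ i, w i * f i ^ 2
          = (∑ i, w i * f' i ^ 2) + (M^2 - m^2) * ∑ i ∈ T, w i := by
        calc ∑ i, w i * f i ^ 2
            = ∑ i, (w i * f' i ^ 2 + if i ∈ T then w i * (M^2 - m^2) else 0) :=
              Finset.sum_congr rfl (fun i _ => hidw i)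
          _ = (∑ i, w i * f' i ^ 2) + ∑ i, (if i ∈ T then w i * (M^2 - m^2) else 0) :=
              Finset.sum_add_distrib
          _ = (∑ i, w i * f' i ^ 2) + (M^2 - m^2) * ∑ i ∈ T, w i := by
              rw [Finset.sum_ite_mem, Finset.univ_inter, ← Finset.sum_mul, mul_comm]
      have hidm : ∀ i j, a i j * max (f i ^ 2 - f j ^ 2) 0
          = a i j * max (f' i ^ 2 - f' j ^ 2) 0
            + (if i ∈ T ∧ j ∉ T then a i j * (M^2 - m^2) else 0) := by
        intro i j
        by_cases hi : i ∈ T <;> by_cases hj : j ∈ T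
        · rw [hf'T i hi, hf'T j hj, (hTmem i).mp hi, (hTmem j).mp hj]
          simp [hj]
        · rw [hf'T i hi, hf'nT j hj, (hTmem i).mp hi, if_pos ⟨hi, hj⟩]
          have h1 : f j ≤ m := hmub j hj
          have h2 : 0 ≤ m ^ 2 - f j ^ 2 := by nlinarith [hf0 j]
          have h3 : 0 ≤ M ^ 2 - f j ^ 2 := by nlinarith
          rw [max_eq_left h3, max_eq_left h2]
          ring
        · rw [hf'nT i hi, hf'T j hj, (hTmem j).mp hj]
          have h1 : f i ≤ m := hmub i hi
          have h2 : f i ^ 2 - M ^ 2 ≤ 0 := by nlinarith [hf0 i]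
          have h3 : f i ^ 2 - m ^ 2 ≤ 0 := by nlinarith [hf0 i]
          rw [max_eq_right h2, max_eq_right h3]
          simp [hi]
        · rw [hf'nT i hi, hf'nT j hj, if_neg (fun h : i ∈ T ∧ j ∉ T => hi h.1)]
          ring
      have hsummax : ∑ i, ∑ j, a i j * max (f i ^ 2 - f j ^ 2) 0
          = (∑ i, ∑ j, a i j * max (f' i ^ 2 - f' j ^ 2) 0)
            + (M^2 - m^2) * ∑ i ∈ T, ∑ j ∈ Tᶜ, a i j := by
        calc ∑ i, ∑ j, a i j * max (f i ^ 2 - f j ^ 2) 0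
            = ∑ i, ∑ j, (a i j * max (f' i ^ 2 - f' j ^ 2) 0
              + (if i ∈ T ∧ j ∉ T then a i j * (M^2 - m^2) else 0)) := by
              exact Finset.sum_congr rfl (fun i _ => Finset.sum_congr rfl (fun j _ => hidm i j))
          _ = (∑ i, ∑ j, a i j * max (f' i ^ 2 - f' j ^ 2) 0)
              + ∑ i, ∑ j, (if i ∈ T ∧ j ∉ T then a i j * (M^2 - m^2) else 0) := by
              rw [← Finset.sum_add_distrib]
              exact Finset.sum_congr rfl (fun i _ => Finset.sum_add_distrib)
          _ = (∑ i, ∑ j, a i j * max (f' i ^ 2 - f' j ^ 2) 0)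
              + (M^2 - m^2) * ∑ i ∈ T, ∑ j ∈ Tᶜ, a i j := by
              congr 1
              rw [Finset.mul_sum]
              rw [← Finset.sum_subset (Finset.subset_univ T)]
              · apply Finset.sum_congr rfl
                intro i hi
                rw [Finset.mul_sum]
                rw [← Finset.sum_subset (Finset.subset_univ Tᶜ)]
                · apply Finset.sum_congr rfl
                  intro j hj
                  rw [if_pos ⟨hi, Finset.mem_compl.mp hj⟩]
                  ring
                · intro j _ hj
                  rw [if_neg (fun h => h.2 (by simpa using hj))]
              · intro i _ hi
                apply Finset.sum_eq_zero
                intro j _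
                rw [if_neg (fun h => hi h.1)]
      rw [hsumw, hsummax, mul_add]
      have hstep : hW * ((M^2 - m^2) * ∑ i ∈ T, w i)
          ≤ (M^2 - m^2) * ∑ i ∈ T, ∑ j ∈ Tᶜ, a i j := by
        rw [← mul_assoc, mul_comm hW, mul_assoc]
        exact mul_le_mul_of_nonneg_left hcutT hMm
      linarith [IH]


lemma cheeger_aux {N : ℕ} (a : Matrix (Fin N) (Fin N) ℝ)
    (hsym : a.IsSymm) (hnn : ∀ i j, 0 ≤ a i j)
    (w : Fin N → ℝ) (hw : ∀ i, 0 < w i)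
    (δmax : ℝ) (hδ : IsGreatest {x : ℝ | ∃ i, x = ∑ j, a i j} δmax)
    (wmin : ℝ) (hwmin : IsLeast {x : ℝ | ∃ i, x = w i} wmin)
    (hW : ℝ)
    (hsweep : ∀ (f : Fin N → ℝ), (∀ i, 0 ≤ f i) →
      ∀ P : Finset (Fin N), (∀ i, 0 < f i → i ∈ P) → (∑ i ∈ P, w i) ≤ (∑ i ∈ Pᶜ, w i) →
      hW * ∑ i, w i * f i ^ 2 ≤ ∑ i, ∑ j, a i j * max (f i ^ 2 - f j ^ 2) 0)
    (lam : ℝ) (u : Fin N → ℝ)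
    (heig : ∀ i, (∑ j, a i j) * u i - (∑ j, a i j * u j) = lam * (w i * u i))
    (hpos : ∃ i, 0 < u i)
    (hside : (∑ i ∈ Finset.univ.filter (fun i => 0 < u i), w i)
      ≤ ∑ i ∈ (Finset.univ.filter (fun i => 0 < u i))ᶜ, w i) :
    hW ≤ Real.sqrt (2 * δmax * lam / wmin) := by
  obtain ⟨ip, hip⟩ := hpos
  have hwmin_pos : 0 < wmin := by
    obtain ⟨i, hi⟩ := hwmin.1
    exact hi ▸ hw i
  have hwmin_le : ∀ i, wmin ≤ w i := fun i => hwmin.2 ⟨i, rfl⟩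
  have hd_le : ∀ i, ∑ j, a i j ≤ δmax := fun i => hδ.2 ⟨i, rfl⟩
  set f : Fin N → ℝ := fun i => max (u i) 0 with hf
  have hf0 : ∀ i, 0 ≤ f i := fun i => le_max_right _ _
  have hfu : ∀ i, 0 < u i → f i = u i := fun i hi => max_eq_left (le_of_lt hi)
  have hfz : ∀ i, ¬ (0 < u i) → f i = 0 := fun i hi => max_eq_right (not_lt.mp hi)
  have hfP : ∀ i, 0 < f i → i ∈ Finset.univ.filter (fun i => 0 < u i) := by
    intro i hi
    simp only [Finset.mem_filter, Finset.mem_univ, true_and]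
    by_contra h
    rw [hfz i h] at hi
    exact lt_irrefl 0 hi
  set A := ∑ i, w i * f i ^ 2 with hA
  have hApos : 0 < A := by
    apply Finset.sum_pos' (fun i _ => mul_nonneg (le_of_lt (hw i)) (sq_nonneg _))
    exact ⟨ip, Finset.mem_univ ip, mul_pos (hw ip)
      (by rw [hfu ip hip]; exact pow_pos hip 2)⟩
  -- sweep bound
  have hsw := hsweep f hf0 _ hfP hside
  -- quadratic form identity
  have key : ∀ g : Fin N → ℝ, ∑ i, ∑ j, a i j * (g i - g j) ^ 2
      = 2 * ∑ i, g i * ((∑ j, a i j) * g i - ∑ j, a i j * g j) := by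
    intro g
    have e1 : ∀ i j, a i j * (g i - g j) ^ 2
        = a i j * g i ^ 2 + a i j * g j ^ 2 - 2 * (g i * (a i j * g j)) := by
      intro i j; ring
    have e2 : ∑ i, ∑ j, a i j * g j ^ 2 = ∑ i, ∑ j, a i j * g i ^ 2 := by
      rw [Finset.sum_comm]
      exact Finset.sum_congr rfl fun j _ => Finset.sum_congr rfl fun i _ => by
        rw [hsym.apply j i]
    calc ∑ i, ∑ j, a i j * (g i - g j) ^ 2
        = ∑ i, ∑ j, (a i j * g i ^ 2 + a i j * g j ^ 2 - 2 * (g i * (a i j * g j))) :=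
          Finset.sum_congr rfl fun i _ => Finset.sum_congr rfl fun j _ => e1 i j
      _ = ∑ i, ((∑ j, a i j * g i ^ 2) + (∑ j, a i j * g j ^ 2) - ∑ j, 2 * (g i * (a i j * g j))) := by
          apply Finset.sum_congr rfl
          intro i _
          rw [Finset.sum_sub_distrib, Finset.sum_add_distrib]
      _ = (∑ i, ∑ j, a i j * g i ^ 2) + (∑ i, ∑ j, a i j * g j ^ 2)
            - ∑ i, ∑ j, 2 * (g i * (a i j * g j)) := by
          rw [Finset.sum_sub_distrib, Finset.sum_add_distrib]
      _ = (∑ i, ∑ j, a i j * g i ^ 2) + (∑ i, ∑ j, a i j * g i ^ 2)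
            - ∑ i, ∑ j, 2 * (g i * (a i j * g j)) := by rw [e2]
      _ = 2 * ∑ i, g i * ((∑ j, a i j) * g i - ∑ j, a i j * g j) := by
          rw [Finset.mul_sum]
          rw [← Finset.sum_add_distrib, ← Finset.sum_sub_distrib]
          apply Finset.sum_congr rfl
          intro i _
          rw [← Finset.sum_mul, ← Finset.mul_sum, ← Finset.mul_sum]
          ring
  -- energy bound
  set E := ∑ i, f i * ((∑ j, a i j) * f i - ∑ j, a i j * f j) with hE
  have hEle : E ≤ lam * A := by
    rw [hA, Finset.mul_sum]
    apply Finset.sum_le_sum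
    intro i _
    by_cases hi : 0 < u i
    · have hfi : f i = u i := hfu i hi
      have h1 : ∑ j, a i j * u j ≤ ∑ j, a i j * f j :=
        Finset.sum_le_sum fun j _ => mul_le_mul_of_nonneg_left (le_max_left _ _) (hnn i j)
      calc f i * ((∑ j, a i j) * f i - ∑ j, a i j * f j)
          ≤ f i * ((∑ j, a i j) * u i - ∑ j, a i j * u j) := by
            apply mul_le_mul_of_nonneg_left _ (hf0 i)
            rw [hfi]
            linarith
        _ = u i * (lam * (w i * u i)) := by rw [hfi, ← heig i]
        _ = lam * (w i * f i ^ 2) := by rw [hfi]; ring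
    · rw [hfz i hi]
      simp
  have hEnn : 0 ≤ 2 * E := by
    rw [← key f]
    apply Finset.sum_nonneg; intro i _
    apply Finset.sum_nonneg; intro j _
    exact mul_nonneg (hnn i j) (sq_nonneg _)
  -- Qm and Qp
  set Qm := ∑ i, ∑ j, a i j * (f i - f j) ^ 2 with hQm
  set Qp := ∑ i, ∑ j, a i j * (f i + f j) ^ 2 with hQp
  have hQmE : Qm = 2 * E := key f
  have hQmle : Qm ≤ 2 * lam * A := by rw [hQmE]; linarith
  have hQpnn : 0 ≤ Qp := by
    apply Finset.sum_nonneg; intro i _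
    apply Finset.sum_nonneg; intro j _
    exact mul_nonneg (hnn i j) (sq_nonneg _)
  have hQmnn : 0 ≤ Qm := hQmE ▸ hEnn
  -- Qp bound
  have hQple : Qp ≤ 4 * δmax / wmin * A := by
    have step1 : Qp ≤ ∑ i, ∑ j, (a i j * (2 * f i ^ 2) + a i j * (2 * f j ^ 2)) := by
      apply Finset.sum_le_sum; intro i _
      apply Finset.sum_le_sum; intro j _
      have : (f i + f j) ^ 2 ≤ 2 * f i ^ 2 + 2 * f j ^ 2 := by nlinarith [sq_nonneg (f i - f j)]
      nlinarith [hnn i j]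
    have swap2 : ∑ i, ∑ j, a i j * (2 * f j ^ 2) = ∑ i, ∑ j, a i j * (2 * f i ^ 2) := by
      rw [Finset.sum_comm]
      exact Finset.sum_congr rfl fun j _ => Finset.sum_congr rfl fun i _ => by
        rw [hsym.apply j i]
    have step2 : ∑ i, ∑ j, (a i j * (2 * f i ^ 2) + a i j * (2 * f j ^ 2))
        = 4 * ∑ i, (∑ j, a i j) * f i ^ 2 := by
      rw [show (∑ i, ∑ j, (a i j * (2 * f i ^ 2) + a i j * (2 * f j ^ 2)))
        = (∑ i, ∑ j, a i j * (2 * f i ^ 2)) + ∑ i, ∑ j, a i j * (2 * f j ^ 2) by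
          rw [← Finset.sum_add_distrib]
          exact Finset.sum_congr rfl fun i _ => Finset.sum_add_distrib]
      rw [swap2, Finset.mul_sum, ← Finset.sum_add_distrib]
      apply Finset.sum_congr rfl
      intro i _
      simp only [← Finset.sum_mul]
      ring
    have step3 : ∑ i, (∑ j, a i j) * f i ^ 2 ≤ δmax / wmin * A := by
      rw [hA, Finset.mul_sum]
      apply Finset.sum_le_sum
      intro i _
      have h1 : (∑ j, a i j) * f i ^ 2 ≤ δmax * f i ^ 2 :=
        mul_le_mul_of_nonneg_right (hd_le i) (sq_nonneg _)
      have hδ0 : 0 ≤ δmax :=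
        le_trans (Finset.sum_nonneg fun j _ => hnn ip j) (hd_le ip)
      have h2 : δmax * f i ^ 2 ≤ δmax / wmin * (w i * f i ^ 2) := by
        rw [div_mul_eq_mul_div, le_div_iff₀ hwmin_pos]
        nlinarith [mul_nonneg (mul_nonneg hδ0 (sq_nonneg (f i)))
          (sub_nonneg.mpr (hwmin_le i))]
      linarith
    calc Qp ≤ ∑ i, ∑ j, (a i j * (2 * f i ^ 2) + a i j * (2 * f j ^ 2)) := step1
      _ = 4 * ∑ i, (∑ j, a i j) * f i ^ 2 := step2
      _ ≤ 4 * (δmax / wmin * A) := by linarith [step3]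
      _ = 4 * δmax / wmin * A := by ring
  -- |x| sum and Cauchy-Schwarz
  set S := ∑ i, ∑ j, a i j * |f i ^ 2 - f j ^ 2| with hS
  have hSplus : 2 * (∑ i, ∑ j, a i j * max (f i ^ 2 - f j ^ 2) 0) = S := by
    have swap3 : ∑ i, ∑ j, a i j * max (f j ^ 2 - f i ^ 2) 0
        = ∑ i, ∑ j, a i j * max (f i ^ 2 - f j ^ 2) 0 := by
      rw [Finset.sum_comm]
      exact Finset.sum_congr rfl fun j _ => Finset.sum_congr rfl fun i _ => by
        rw [hsym.apply j i]
    rw [hS, two_mul]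
    nth_rewrite 2 [← swap3]
    rw [← Finset.sum_add_distrib]
    apply Finset.sum_congr rfl
    intro i _
    rw [← Finset.sum_add_distrib]
    apply Finset.sum_congr rfl
    intro j _
    rw [← mul_add]
    congr 1
    rcases le_total (f j ^ 2) (f i ^ 2) with h | h
    · rw [max_eq_left (by linarith), max_eq_right (by linarith), abs_of_nonneg (by linarith)]
      ring
    · rw [max_eq_right (by linarith), max_eq_left (by linarith), abs_of_nonpos (by linarith)]
      ring
  have hCS : S ^ 2 ≤ Qm * Qp := by
    have := Finset.sum_mul_sq_le_sq_mul_sq (Finset.univ : Finset (Fin N × Fin N))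
      (fun p => Real.sqrt (a p.1 p.2) * |f p.1 - f p.2|)
      (fun p => Real.sqrt (a p.1 p.2) * (f p.1 + f p.2))
    have eS : ∑ p : Fin N × Fin N,
        (Real.sqrt (a p.1 p.2) * |f p.1 - f p.2|) * (Real.sqrt (a p.1 p.2) * (f p.1 + f p.2))
        = S := by
      rw [hS, ← Finset.univ_product_univ, Finset.sum_product]
      apply Finset.sum_congr rfl; intro i _
      apply Finset.sum_congr rfl; intro j _
      have h1 : Real.sqrt (a i j) * Real.sqrt (a i j) = a i j := Real.mul_self_sqrt (hnn i j)
      have h2 : |f i - f j| * (f i + f j) = |f i ^ 2 - f j ^ 2| := by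
        rw [← abs_of_nonneg (show (0:ℝ) ≤ f i + f j from add_nonneg (hf0 i) (hf0 j)),
          ← abs_mul]
        congr 1
        ring
      calc (Real.sqrt (a i j) * |f i - f j|) * (Real.sqrt (a i j) * (f i + f j))
          = (Real.sqrt (a i j) * Real.sqrt (a i j)) * (|f i - f j| * (f i + f j)) := by ring
        _ = a i j * |f i ^ 2 - f j ^ 2| := by rw [h1, h2]
    have eQm : ∑ p : Fin N × Fin N, (Real.sqrt (a p.1 p.2) * |f p.1 - f p.2|) ^ 2 = Qm := by
      rw [hQm, ← Finset.univ_product_univ, Finset.sum_product]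
      apply Finset.sum_congr rfl; intro i _
      apply Finset.sum_congr rfl; intro j _
      rw [mul_pow, Real.sq_sqrt (hnn i j), sq_abs]
    have eQp : ∑ p : Fin N × Fin N, (Real.sqrt (a p.1 p.2) * (f p.1 + f p.2)) ^ 2 = Qp := by
      rw [hQp, ← Finset.univ_product_univ, Finset.sum_product]
      apply Finset.sum_congr rfl; intro i _
      apply Finset.sum_congr rfl; intro j _
      rw [mul_pow, Real.sq_sqrt (hnn i j)]
    rw [eS, eQm, eQp] at this
    exact this
  have hSnn : 0 ≤ S := by
    apply Finset.sum_nonneg; intro i _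
    apply Finset.sum_nonneg; intro j _
    exact mul_nonneg (hnn i j) (abs_nonneg _)
  -- combine
  have hSle : S ≤ Real.sqrt (Qm * Qp) := by
    rw [show S = Real.sqrt (S ^ 2) from (Real.sqrt_sq hSnn).symm]
    exact Real.sqrt_le_sqrt hCS
  have hprod : Qm * Qp ≤ (2 * lam * A) * (4 * δmax / wmin * A) := by
    apply mul_le_mul hQmle hQple hQpnn
    linarith
  have hsqrt2 : Real.sqrt ((2 * lam * A) * (4 * δmax / wmin * A))
      = 2 * A * Real.sqrt (2 * δmax * lam / wmin) := by
    rw [show (2 * lam * A) * (4 * δmax / wmin * A) = (2 * A) ^ 2 * (2 * δmax * lam / wmin) by ring]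
    rw [Real.sqrt_mul (sq_nonneg _), Real.sqrt_sq (by linarith)]
  have hfinal : hW * A ≤ Real.sqrt (2 * δmax * lam / wmin) * A := by
    calc hW * A ≤ ∑ i, ∑ j, a i j * max (f i ^ 2 - f j ^ 2) 0 := hsw
      _ = S / 2 := by rw [← hSplus]; ring
      _ ≤ Real.sqrt (Qm * Qp) / 2 := by linarith
      _ ≤ Real.sqrt ((2 * lam * A) * (4 * δmax / wmin * A)) / 2 := by
          have := Real.sqrt_le_sqrt hprod
          linarith
      _ = Real.sqrt (2 * δmax * lam / wmin) * A := by rw [hsqrt2]; ring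
  exact le_of_mul_le_mul_right hfinal hApos


section helpers

variable {N : ℕ}

lemma quad_identity (a : Matrix (Fin N) (Fin N) ℝ) (hsym : a.IsSymm) (g : Fin N → ℝ) :
    ∑ i, ∑ j, a i j * (g i - g j) ^ 2
      = 2 * ∑ i, g i * ((∑ j, a i j) * g i - ∑ j, a i j * g j) := by
  have e2 : ∑ i, ∑ j, a i j * g j ^ 2 = ∑ i, ∑ j, a i j * g i ^ 2 := by
    rw [Finset.sum_comm]
    exact Finset.sum_congr rfl fun j _ => Finset.sum_congr rfl fun i _ => by
      rw [hsym.apply j i]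
  calc ∑ i, ∑ j, a i j * (g i - g j) ^ 2
      = ∑ i, ∑ j, (a i j * g i ^ 2 + a i j * g j ^ 2 - 2 * (g i * (a i j * g j))) :=
        Finset.sum_congr rfl fun i _ => Finset.sum_congr rfl fun j _ => by ring
    _ = ∑ i, ((∑ j, a i j * g i ^ 2) + (∑ j, a i j * g j ^ 2) - ∑ j, 2 * (g i * (a i j * g j))) := by
        apply Finset.sum_congr rfl
        intro i _
        rw [Finset.sum_sub_distrib, Finset.sum_add_distrib]
    _ = (∑ i, ∑ j, a i j * g i ^ 2) + (∑ i, ∑ j, a i j * g j ^ 2)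
          - ∑ i, ∑ j, 2 * (g i * (a i j * g j)) := by
        rw [Finset.sum_sub_distrib, Finset.sum_add_distrib]
    _ = (∑ i, ∑ j, a i j * g i ^ 2) + (∑ i, ∑ j, a i j * g i ^ 2)
          - ∑ i, ∑ j, 2 * (g i * (a i j * g j)) := by rw [e2]
    _ = 2 * ∑ i, g i * ((∑ j, a i j) * g i - ∑ j, a i j * g j) := by
        rw [Finset.mul_sum]
        rw [← Finset.sum_add_distrib, ← Finset.sum_sub_distrib]
        apply Finset.sum_congr rfl
        intro i _
        rw [← Finset.sum_mul, ← Finset.mul_sum, ← Finset.mul_sum]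
        ring

end helpers


end CheegerHelpers

open Matrix Finset in
theorem weighted_cheeger_upper_bound {N : ℕ} (hN : 2 ≤ N)
    (a : Matrix (Fin N) (Fin N) ℝ)
    (hsym : a.IsSymm) (hnn : ∀ i j, 0 ≤ a i j) (hdiag : ∀ i, a i i = 0)
    -- connectivity: every proper nonempty cut has positive capacity
    (hconn : ∀ S : Finset (Fin N), S.Nonempty → S ≠ Finset.univ →
      0 < ∑ i ∈ S, ∑ j ∈ Sᶜ, a i j)
    (w : Fin N → ℝ) (hw : ∀ i, 0 < w i)
    (LW : Matrix (Fin N) (Fin N) ℝ)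
    (hLW : LW = Matrix.diagonal (fun i => (Real.sqrt (w i))⁻¹) *
      (Matrix.diagonal (fun i => ∑ j, a i j) - a) *
      Matrix.diagonal (fun i => (Real.sqrt (w i))⁻¹))
    (hherm : LW.IsHermitian)
    (μ : Fin N → ℝ) (hmono : Monotone μ)
    (henum : ∃ σ : Equiv.Perm (Fin N), ∀ i, μ i = hherm.eigenvalues (σ i))
    -- maximum weighted node degree and minimum node weight
    (δmax : ℝ) (hδ : IsGreatest {x : ℝ | ∃ i, x = ∑ j, a i j} δmax)
    (wmin : ℝ) (hwmin : IsLeast {x : ℝ | ∃ i, x = w i} wmin)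
    -- h_W is the weighted Cheeger constant
    (hW : ℝ)
    (hCheeger : IsLeast {r : ℝ | ∃ S : Finset (Fin N), S.Nonempty ∧ S ≠ Finset.univ ∧
      r = (∑ i ∈ S, ∑ j ∈ Sᶜ, a i j) / min (∑ i ∈ S, w i) (∑ i ∈ Sᶜ, w i)} hW) :
    hW ≤ Real.sqrt (2 * δmax * μ ⟨1, by omega⟩ / wmin) := by
  obtain ⟨σ, hσ⟩ := henum
  set sqw : Fin N → ℝ := fun i => Real.sqrt (w i) with hsqw
  have hsqw_pos : ∀ i, 0 < sqw i := fun i => Real.sqrt_pos.mpr (hw i)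
  have hsqw_ne : ∀ i, sqw i ≠ 0 := fun i => (hsqw_pos i).ne'
  have hsq : ∀ i, sqw i * sqw i = w i := fun i => Real.mul_self_sqrt (le_of_lt (hw i))
  -- entries of LW
  have hentry : ∀ i j, LW i j
      = (sqw i)⁻¹ * ((if i = j then ∑ k, a i k else 0) - a i j) * (sqw j)⁻¹ := by
    intro i j
    rw [hLW, Matrix.mul_diagonal, Matrix.diagonal_mul, Matrix.sub_apply,
      Matrix.diagonal_apply]
  -- scalar eigen-equation
  have scalar_eig : ∀ (ν : ℝ) (x : Fin N → ℝ), (LW *ᵥ x = ν • x) → ∀ i,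
      (∑ j, a i j) * (x i * (sqw i)⁻¹) - (∑ j, a i j * (x j * (sqw j)⁻¹))
        = ν * (w i * (x i * (sqw i)⁻¹)) := by
    intro ν x hx i
    have h1 : ∑ j, LW i j * x j = ν * x i := by
      have := congrFun hx i
      simpa [Matrix.mulVec, dotProduct] using this
    have h2 : ∑ j, LW i j * x j
        = (sqw i)⁻¹ * ((∑ j, a i j) * (x i * (sqw i)⁻¹)
          - ∑ j, a i j * (x j * (sqw j)⁻¹)) := by
      calc ∑ j, LW i j * x j
          = ∑ j, (sqw i)⁻¹ * (((if i = j then ∑ k, a i k else 0)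
              - a i j) * (x j * (sqw j)⁻¹)) := by
            apply Finset.sum_congr rfl
            intro j _
            rw [hentry i j]
            ring
        _ = (sqw i)⁻¹ * ∑ j, (((if i = j then ∑ k, a i k else 0)
              - a i j) * (x j * (sqw j)⁻¹)) := by rw [Finset.mul_sum]
        _ = (sqw i)⁻¹ * ((∑ j, a i j) * (x i * (sqw i)⁻¹)
            - ∑ j, a i j * (x j * (sqw j)⁻¹)) := by
            congr 1
            rw [show (∑ j, (((if i = j then ∑ k, a i k else 0) - a i j) * (x j * (sqw j)⁻¹)))
              = (∑ j, (if i = j then (∑ k, a i k) * (x j * (sqw j)⁻¹) else 0))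
                - ∑ j, a i j * (x j * (sqw j)⁻¹) by
                rw [← Finset.sum_sub_distrib]
                apply Finset.sum_congr rfl
                intro j _
                by_cases h : i = j <;> simp [h] <;> ring]
            rw [Finset.sum_ite_eq]
            simp
    rw [h2] at h1
    have h3 := congrArg (fun t => sqw i * t) h1
    replace h3 : sqw i * ((sqw i)⁻¹ * ((∑ j, a i j) * (x i * (sqw i)⁻¹)
        - ∑ j, a i j * (x j * (sqw j)⁻¹))) = sqw i * (ν * x i) := h3
    rw [← mul_assoc, mul_inv_cancel₀ (hsqw_ne i), one_mul] at h3
    rw [h3]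
    have hwx : w i * (x i * (sqw i)⁻¹) = sqw i * x i := by
      rw [← hsq i]
      rw [show (sqw i * sqw i) * (x i * (sqw i)⁻¹) = (sqw i * (sqw i)⁻¹) * (sqw i * x i) by ring,
        mul_inv_cancel₀ (hsqw_ne i), one_mul]
    rw [hwx]
    ring
  -- LW kills sqw
  have hker : LW *ᵥ sqw = 0 := by
    funext i
    show ∑ j, LW i j * sqw j = 0
    calc ∑ j, LW i j * sqw j
        = ∑ j, (sqw i)⁻¹ * ((if i = j then ∑ k, a i k else 0) - a i j) := by
          apply Finset.sum_congr rfl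
          intro j _
          rw [hentry i j, mul_assoc, mul_assoc, inv_mul_cancel₀ (hsqw_ne j), mul_one]
      _ = (sqw i)⁻¹ * ((∑ j, (if i = j then ∑ k, a i k else 0)) - ∑ j, a i j) := by
          rw [← Finset.mul_sum]
          congr 1
          rw [Finset.sum_sub_distrib]
      _ = 0 := by
          rw [Finset.sum_ite_eq]
          simp
  -- Rayleigh identity for eigenvectors
  have rayleigh : ∀ (ν : ℝ) (x : Fin N → ℝ), (LW *ᵥ x = ν • x) →
      2 * (ν * ∑ i, x i ^ 2)
        = ∑ i, ∑ j, a i j * ((x i * (sqw i)⁻¹) - (x j * (sqw j)⁻¹)) ^ 2 := by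
    intro ν x hx
    have hs := scalar_eig ν x hx
    have hq := quad_identity a hsym (fun i => x i * (sqw i)⁻¹)
    rw [hq]
    congr 1
    calc ν * ∑ i, x i ^ 2
        = ∑ i, (x i * (sqw i)⁻¹) * (ν * (w i * (x i * (sqw i)⁻¹))) := by
          rw [Finset.mul_sum]
          apply Finset.sum_congr rfl
          intro i _
          rw [show (x i * (sqw i)⁻¹) * (ν * (w i * (x i * (sqw i)⁻¹)))
            = ν * ((w i * ((sqw i)⁻¹ * (sqw i)⁻¹)) * x i ^ 2) by ring]
          rw [← hsq i]
          rw [show (sqw i * sqw i) * ((sqw i)⁻¹ * (sqw i)⁻¹)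
            = (sqw i * (sqw i)⁻¹) * (sqw i * (sqw i)⁻¹) by ring]
          rw [mul_inv_cancel₀ (hsqw_ne i)]
          ring
      _ = ∑ i, (x i * (sqw i)⁻¹) * ((∑ j, a i j) * (x i * (sqw i)⁻¹)
            - ∑ j, a i j * (x j * (sqw j)⁻¹)) := by
          apply Finset.sum_congr rfl
          intro i _
          rw [hs i]
  -- norms of eigenvectors
  have hnorm1 : ∀ k, ∑ i, (hherm.eigenvectorBasis k) i * (hherm.eigenvectorBasis k) i = 1 := by
    intro k
    have h2 : inner ℝ (hherm.eigenvectorBasis k) (hherm.eigenvectorBasis k) = 1 := by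
      rw [real_inner_self_eq_norm_sq, hherm.eigenvectorBasis.orthonormal.1 k]
      norm_num
    rw [← h2, PiLp.inner_apply]
    simp [RCLike.inner_apply, pow_two]
  -- positive semidefiniteness
  have hpsd : ∀ k, 0 ≤ hherm.eigenvalues k := by
    intro k
    set x : Fin N → ℝ := ⇑(hherm.eigenvectorBasis k) with hxdef
    have hx : LW *ᵥ x = hherm.eigenvalues k • x := hherm.mulVec_eigenvectorBasis k
    have hr := rayleigh (hherm.eigenvalues k) x hx
    have hnn2 : 0 ≤ 2 * (hherm.eigenvalues k * ∑ i, x i ^ 2) := by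
      rw [hr]
      apply Finset.sum_nonneg; intro i _
      apply Finset.sum_nonneg; intro j _
      exact mul_nonneg (hnn i j) (sq_nonneg _)
    have hsum1 : ∑ i, x i ^ 2 = 1 := by
      have h := hnorm1 k
      calc ∑ i, x i ^ 2 = ∑ i, (hherm.eigenvectorBasis k) i * (hherm.eigenvectorBasis k) i :=
            Finset.sum_congr rfl fun i _ => pow_two (x i)
        _ = 1 := h
    rw [hsum1, mul_one] at hnn2
    linarith
  -- kernel characterization
  have hker_const : ∀ x : Fin N → ℝ, LW *ᵥ x = 0 → ∃ c, ∀ i, x i = c * sqw i := by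
    intro x hx
    have hx' : LW *ᵥ x = (0:ℝ) • x := by rw [zero_smul]; exact hx
    have hq := rayleigh 0 x hx'
    rw [zero_mul, mul_zero] at hq
    set u : Fin N → ℝ := fun i => x i * (sqw i)⁻¹ with hu
    have hterm1 : ∀ i ∈ Finset.univ, ∑ j, a i j * (u i - u j) ^ 2 = 0 := by
      rw [← Finset.sum_eq_zero_iff_of_nonneg]
      · exact hq.symm
      · intro i _
        apply Finset.sum_nonneg; intro j _
        exact mul_nonneg (hnn i j) (sq_nonneg _)
    have hterm2 : ∀ i j, a i j ≠ 0 → u i = u j := by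
      intro i j hne
      have h1 : ∀ j' ∈ Finset.univ, a i j' * (u i - u j') ^ 2 = 0 := by
        rw [← Finset.sum_eq_zero_iff_of_nonneg]
        · exact hterm1 i (Finset.mem_univ i)
        · intro j' _
          exact mul_nonneg (hnn i j') (sq_nonneg _)
      have h2 := h1 j (Finset.mem_univ j)
      rcases mul_eq_zero.mp h2 with h | h
      · exact absurd h hne
      · have := pow_eq_zero_iff (n := 2) (by norm_num) |>.mp h
        linarith [this]
    set i0 : Fin N := ⟨0, by omega⟩ with hi0
    set S : Finset (Fin N) := Finset.univ.filter (fun i => u i = u i0) with hSdef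
    have hSuniv : S = Finset.univ := by
      by_contra hSu
      have h1 := hconn S ⟨i0, by simp [hSdef]⟩ hSu
      have h2 : ∑ i ∈ S, ∑ j ∈ Sᶜ, a i j = 0 := by
        apply Finset.sum_eq_zero; intro i hi
        apply Finset.sum_eq_zero; intro j hj
        by_contra hne
        have hij := hterm2 i j hne
        rw [hSdef, Finset.mem_filter] at hi
        rw [Finset.mem_compl, hSdef, Finset.mem_filter] at hj
        exact hj ⟨Finset.mem_univ j, hij ▸ hi.2⟩
      rw [h2] at h1
      exact lt_irrefl 0 h1
    refine ⟨u i0, fun i => ?_⟩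
    have hi : u i = u i0 := by
      have : i ∈ S := hSuniv ▸ Finset.mem_univ i
      rw [hSdef, Finset.mem_filter] at this
      exact this.2
    have : x i * (sqw i)⁻¹ = u i0 := hi
    calc x i = (x i * (sqw i)⁻¹) * sqw i := by
          rw [mul_assoc, inv_mul_cancel₀ (hsqw_ne i), mul_one]
      _ = u i0 * sqw i := by rw [this]
  -- symmetry of LW
  have hLWsym : ∀ i j, LW i j = LW j i := by
    intro i j
    rw [hentry i j, hentry j i]
    have h1 : a i j = a j i := (hsym.apply i j).symm
    have h2 : (if i = j then ∑ k, a i k else 0) = (if j = i then ∑ k, a j k else 0) := by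
      by_cases h : i = j
      · subst h; rfl
      · rw [if_neg h, if_neg (Ne.symm h)]
    rw [h1, h2]
    ring
  -- the second eigenvalue and eigenvector
  have hx1 : LW *ᵥ ⇑(hherm.eigenvectorBasis (σ ⟨1, by omega⟩))
      = μ ⟨1, by omega⟩ • ⇑(hherm.eigenvectorBasis (σ ⟨1, by omega⟩)) := by
    rw [hσ ⟨1, by omega⟩]
    exact hherm.mulVec_eigenvectorBasis _
  set x1 : Fin N → ℝ := ⇑(hherm.eigenvectorBasis (σ ⟨1, by omega⟩)) with hx1def
  -- μ₁ ≠ 0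
  have hmu1 : μ ⟨1, by omega⟩ ≠ 0 := by
    intro h0
    have hmu0le : μ ⟨0, by omega⟩ ≤ μ ⟨1, by omega⟩ := hmono (by simp [Fin.le_def])
    have hmu0ge : 0 ≤ μ ⟨0, by omega⟩ := by rw [hσ]; exact hpsd _
    have hmu0 : μ ⟨0, by omega⟩ = 0 := le_antisymm (h0 ▸ hmu0le) hmu0ge
    set x0 : Fin N → ℝ := ⇑(hherm.eigenvectorBasis (σ ⟨0, by omega⟩)) with hx0def
    have hx0ker : LW *ᵥ x0 = 0 := by
      have h := hherm.mulVec_eigenvectorBasis (σ ⟨0, by omega⟩)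
      rw [← hσ ⟨0, by omega⟩, hmu0] at h
      rw [hx0def]
      rw [h, zero_smul]
    have hx1ker : LW *ᵥ x1 = 0 := by
      rw [hx1, h0, zero_smul]
    obtain ⟨c0, hc0⟩ := hker_const x0 hx0ker
    obtain ⟨c1, hc1⟩ := hker_const x1 hx1ker
    have hne01 : σ ⟨0, by omega⟩ ≠ σ ⟨1, by omega⟩ := by
      intro h
      have := σ.injective h
      simp [Fin.ext_iff] at this
    have hinner := hherm.eigenvectorBasis.orthonormal.2 hne01
    have htype : inner ℝ (hherm.eigenvectorBasis (σ ⟨0, by omega⟩))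
        (hherm.eigenvectorBasis (σ ⟨1, by omega⟩)) = 0 := hinner
    rw [PiLp.inner_apply] at htype
    simp only [RCLike.inner_apply, conj_trivial] at htype
    have hinner' : ∑ i, x0 i * x1 i = 0 :=
      (Finset.sum_congr rfl fun i _ => mul_comm _ _).trans htype
    have hinner2 : ∑ i, x0 i * x1 i = c0 * c1 * ∑ i, w i := by
      rw [Finset.mul_sum]
      apply Finset.sum_congr rfl
      intro i _
      rw [hc0 i, hc1 i, ← hsq i]
      ring
    have hwpos : 0 < ∑ i, w i := by
      apply Finset.sum_pos (fun i _ => hw i)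
      exact ⟨⟨0, by omega⟩, Finset.mem_univ _⟩
    have hc0ne : c0 ≠ 0 := by
      intro hc
      have h1 : ∑ i, x0 i * x0 i = 1 := hnorm1 _
      have h2 : ∑ i, x0 i * x0 i = 0 := by
        apply Finset.sum_eq_zero
        intro i _
        rw [hc0 i, hc]
        ring
      rw [h2] at h1
      norm_num at h1
    have hc1ne : c1 ≠ 0 := by
      intro hc
      have h1 : ∑ i, x1 i * x1 i = 1 := hnorm1 _
      have h2 : ∑ i, x1 i * x1 i = 0 := by
        apply Finset.sum_eq_zero
        intro i _
        rw [hc1 i, hc]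
        ring
      rw [h2] at h1
      norm_num at h1
    rw [hinner2] at hinner'
    rcases mul_eq_zero.mp hinner' with h | h
    · rcases mul_eq_zero.mp h with h' | h'
      · exact hc0ne h'
      · exact hc1ne h'
    · linarith
  -- orthogonality to sqw
  set u : Fin N → ℝ := fun i => x1 i * (sqw i)⁻¹ with hudef
  have heig : ∀ i, (∑ j, a i j) * u i - (∑ j, a i j * u j)
      = μ ⟨1, by omega⟩ * (w i * u i) := scalar_eig _ x1 hx1
  have hzero : μ ⟨1, by omega⟩ * (∑ i, sqw i * x1 i) = 0 := by
    calc μ ⟨1, by omega⟩ * (∑ i, sqw i * x1 i)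
        = ∑ i, sqw i * (μ ⟨1, by omega⟩ * x1 i) := by
          rw [Finset.mul_sum]
          exact Finset.sum_congr rfl fun i _ => by ring
      _ = ∑ i, sqw i * (LW *ᵥ x1) i := by
          apply Finset.sum_congr rfl
          intro i _
          congr 1
          rw [hx1]
          simp
      _ = ∑ i, ∑ j, sqw i * (LW i j * x1 j) := by
          apply Finset.sum_congr rfl
          intro i _
          rw [show (LW *ᵥ x1) i = ∑ j, LW i j * x1 j from rfl, Finset.mul_sum]
      _ = ∑ j, ∑ i, sqw i * (LW i j * x1 j) := Finset.sum_comm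
      _ = ∑ j, (∑ i, LW j i * sqw i) * x1 j := by
          apply Finset.sum_congr rfl
          intro j _
          rw [Finset.sum_mul]
          apply Finset.sum_congr rfl
          intro i _
          rw [hLWsym i j]
          ring
      _ = ∑ j, ((LW *ᵥ sqw) j) * x1 j := by
          apply Finset.sum_congr rfl
          intro j _
          congr 1
      _ = 0 := by rw [hker]; simp
  have hsum0 : ∑ i, w i * u i = 0 := by
    have h1 : ∑ i, sqw i * x1 i = 0 := by
      rcases mul_eq_zero.mp hzero with h | h
      · exact absurd h hmu1
      · exact h
    rw [← h1]
    apply Finset.sum_congr rfl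
    intro i _
    rw [hudef]
    simp only
    rw [← hsq i]
    rw [show (sqw i * sqw i) * (x1 i * (sqw i)⁻¹)
      = (sqw i * (sqw i)⁻¹) * (sqw i * x1 i) by ring, mul_inv_cancel₀ (hsqw_ne i), one_mul]
  have hune : ∃ i, u i ≠ 0 := by
    have h1 : ∑ i, x1 i * x1 i = 1 := hnorm1 _
    by_contra h
    push_neg at h
    have h2 : ∑ i, x1 i * x1 i = 0 := by
      apply Finset.sum_eq_zero
      intro i _
      have := h i
      rw [hudef] at this
      simp only [mul_eq_zero, inv_eq_zero] at this
      rcases this with h' | h'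
      · rw [h']; ring
      · exact absurd h' (hsqw_ne i)
    rw [h2] at h1
    norm_num at h1
  have hpos : ∃ i, 0 < u i := by
    by_contra h
    push_neg at h
    have hz : ∀ i ∈ Finset.univ, w i * u i = 0 := by
      rw [← Finset.sum_eq_zero_iff_of_nonpos]
      · exact hsum0
      · intro i _
        exact mul_nonpos_of_nonneg_of_nonpos (le_of_lt (hw i)) (h i)
    obtain ⟨i, hi⟩ := hune
    have := hz i (Finset.mem_univ i)
    rcases mul_eq_zero.mp this with h' | h'
    · exact absurd h' (hw i).ne'
    · exact hi h'
  have hneg : ∃ i, u i < 0 := by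
    by_contra h
    push_neg at h
    have hz : ∀ i ∈ Finset.univ, w i * u i = 0 := by
      rw [← Finset.sum_eq_zero_iff_of_nonneg]
      · exact hsum0
      · intro i _
        exact mul_nonneg (le_of_lt (hw i)) (h i)
    obtain ⟨i, hi⟩ := hune
    have := hz i (Finset.mem_univ i)
    rcases mul_eq_zero.mp this with h' | h'
    · exact absurd h' (hw i).ne'
    · exact hi h'
  -- Cheeger cut bound
  have hcut : ∀ S : Finset (Fin N), S.Nonempty → S ≠ Finset.univ →
      (∑ i ∈ S, w i) ≤ (∑ i ∈ Sᶜ, w i) → hW * ∑ i ∈ S, w i ≤ ∑ i ∈ S, ∑ j ∈ Sᶜ, a i j := by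
    intro S hne hnu hle
    have hmem : (∑ i ∈ S, ∑ j ∈ Sᶜ, a i j) / min (∑ i ∈ S, w i) (∑ i ∈ Sᶜ, w i)
        ∈ {r : ℝ | ∃ S : Finset (Fin N), S.Nonempty ∧ S ≠ Finset.univ ∧
          r = (∑ i ∈ S, ∑ j ∈ Sᶜ, a i j) / min (∑ i ∈ S, w i) (∑ i ∈ Sᶜ, w i)} :=
      ⟨S, hne, hnu, rfl⟩
    have h1 := hCheeger.2 hmem
    rw [min_eq_left hle] at h1
    have hSpos : 0 < ∑ i ∈ S, w i := Finset.sum_pos (fun i _ => hw i) hne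
    rw [le_div_iff₀ hSpos] at h1
    linarith
  have hsweep : ∀ (f : Fin N → ℝ), (∀ i, 0 ≤ f i) →
      ∀ P : Finset (Fin N), (∀ i, 0 < f i → i ∈ P) → (∑ i ∈ P, w i) ≤ (∑ i ∈ Pᶜ, w i) →
      hW * ∑ i, w i * f i ^ 2 ≤ ∑ i, ∑ j, a i j * max (f i ^ 2 - f j ^ 2) 0 :=
    fun f hf P hPf hP =>
      sweep_lemma a hnn w hw hW hcut (Finset.univ.image f).card f le_rfl hf P hPf hP
  -- choose the lighter side
  have hsub1 : Finset.univ.filter (fun i => 0 < -(u i))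
      ⊆ (Finset.univ.filter (fun i => 0 < u i))ᶜ := by
    intro i hi
    simp only [Finset.mem_filter, Finset.mem_univ, true_and] at hi
    simp only [Finset.mem_compl, Finset.mem_filter, Finset.mem_univ, true_and]
    intro h
    linarith
  have hsub2 : Finset.univ.filter (fun i => 0 < u i)
      ⊆ (Finset.univ.filter (fun i => 0 < -(u i)))ᶜ := by
    intro i hi
    simp only [Finset.mem_filter, Finset.mem_univ, true_and] at hi
    simp only [Finset.mem_compl, Finset.mem_filter, Finset.mem_univ, true_and]
    intro h
    linarith
  rcases le_total (∑ i ∈ Finset.univ.filter (fun i => 0 < u i), w i)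
      (∑ i ∈ Finset.univ.filter (fun i => 0 < -(u i)), w i) with hc | hc
  · apply cheeger_aux a hsym hnn w hw δmax hδ wmin hwmin hW hsweep _ u heig hpos
    calc (∑ i ∈ Finset.univ.filter (fun i => 0 < u i), w i)
        ≤ ∑ i ∈ Finset.univ.filter (fun i => 0 < -(u i)), w i := hc
      _ ≤ ∑ i ∈ (Finset.univ.filter (fun i => 0 < u i))ᶜ, w i :=
          Finset.sum_le_sum_of_subset_of_nonneg hsub1 (fun i _ _ => le_of_lt (hw i))
  · have heig' : ∀ i, (∑ j, a i j) * (-(u i)) - (∑ j, a i j * (-(u j)))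
        = μ ⟨1, by omega⟩ * (w i * (-(u i))) := by
      intro i
      have h := heig i
      have h2 : ∑ j, a i j * (-(u j)) = -∑ j, a i j * u j := by
        rw [← Finset.sum_neg_distrib]
        exact Finset.sum_congr rfl fun j _ => by ring
      rw [h2]
      nlinarith [h]
    have hpos' : ∃ i, 0 < -(u i) := by
      obtain ⟨i, hi⟩ := hneg
      exact ⟨i, by linarith⟩
    have := cheeger_aux a hsym hnn w hw δmax hδ wmin hwmin hW hsweep
      (μ ⟨1, by omega⟩) (fun i => -(u i)) heig' hpos' (by
        calc (∑ i ∈ Finset.univ.filter (fun i => 0 < -(u i)), w i)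
            ≤ ∑ i ∈ Finset.univ.filter (fun i => 0 < u i), w i := hc
          _ ≤ ∑ i ∈ (Finset.univ.filter (fun i => 0 < -(u i)))ᶜ, w i :=
              Finset.sum_le_sum_of_subset_of_nonneg hsub2 (fun i _ _ => le_of_lt (hw i)))
    exact this
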